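/- Let K be a field of characteristic p > 2 and let V = (K[t]/(t^p))/K·1 ⊕ (K[t]/(t^p)) be a superspace with even part the first summand (classes of f_0 modulo constants) and odd part the second (elements f_1, representing f_1·θ). Define the even bilinear form ((f_0,f_1),(g_0,g_1)) = ∫(f_0·g_0' - f_1·g_1), where ∫ takes the coefficient of t^{p-1}. Then this form is well defined, antisymmetric on the even part, symmetric on the odd part, zero between parts, and nondegenerate. -/
import Mathlib


open Polynomial

-- key lemma: in characteristic p, the "integral" (coeff of t^(p-1)) of a derivative vanishes
lemma aux_der_coeff (K : Type*) [Field K] (p : ℕ) [CharP K p] (hp : 0 < p)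
    (g : Polynomial K) : (derivative g).coeff (p - 1) = 0 := by
  rw [coeff_derivative]
  have h : ((p - 1 : ℕ) : K) + 1 = 0 := by
    have h2 : p - 1 + 1 = p := by omega
    calc ((p - 1 : ℕ) : K) + 1 = ((p - 1 + 1 : ℕ) : K) := by push_cast; ring
      _ = 0 := by rw [h2, CharP.cast_eq_zero]
  rw [h, mul_zero]

lemma aux_mul_xpow (K : Type*) [Field K] (p : ℕ) (f : Polynomial K) (k : ℕ)
    (hk : k ≤ p - 1) : (f * X ^ k).coeff (p - 1) = f.coeff (p - 1 - k) := by
  have h := coeff_mul_X_pow f k (p - 1 - k)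
  have e : p - 1 = p - 1 - k + k := by omega
  rw [← e] at h
  exact h

/-- Over a field `K` of characteristic `p > 2`, consider the superspace
`V = (K[t]/(t^p))/K·1 ⊕ (K[t]/(t^p))` (even part: classes of `f₀` modulo constants;
odd part: elements `f₁`, standing for `f₁·θ`), with elements represented by pairs
`(f₀, f₁)` of polynomials of degree `< p`.  The even bilinear form
`((f₀,f₁),(g₀,g₁)) = ∫(f₀·g₀' - f₁·g₁)`, where `∫` takes the coefficient of `t^(p-1)`,
is well defined (independent of the constants added to the even components),
antisymmetric on the even part, symmetric on the odd part, zero between the parts,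
and nondegenerate. -/
theorem stmt_4 (K : Type*) [Field K] (p : ℕ) [CharP K p] (hp : 2 < p) :
    -- well-definedness: adding constants to the even components changes nothing
    (∀ f₀ f₁ g₀ g₁ : Polynomial K, f₀.degree < p → g₀.degree < p → ∀ c d : K,
      ((f₀ + C c) * derivative (g₀ + C d)).coeff (p - 1) - (f₁ * g₁).coeff (p - 1)
        = (f₀ * derivative g₀).coeff (p - 1) - (f₁ * g₁).coeff (p - 1)) ∧
    -- antisymmetry on the even part
    (∀ f₀ g₀ : Polynomial K, f₀.degree < p → g₀.degree < p →
      (f₀ * derivative g₀).coeff (p - 1) - ((0 : Polynomial K) * 0).coeff (p - 1)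
        = -((g₀ * derivative f₀).coeff (p - 1) - ((0 : Polynomial K) * 0).coeff (p - 1))) ∧
    -- symmetry on the odd part
    (∀ f₁ g₁ : Polynomial K, f₁.degree < p → g₁.degree < p →
      (derivative (0 : Polynomial K) * 0).coeff (p - 1) - (f₁ * g₁).coeff (p - 1)
        = (derivative (0 : Polynomial K) * 0).coeff (p - 1) - (g₁ * f₁).coeff (p - 1)) ∧
    -- the pairing between the even and odd parts vanishes
    (∀ f₀ g₁ : Polynomial K, f₀.degree < p → g₁.degree < p →
      (f₀ * derivative (0 : Polynomial K)).coeff (p - 1)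
        - ((0 : Polynomial K) * g₁).coeff (p - 1) = 0) ∧
    -- nondegeneracy: an element pairing to zero with everything is zero in V
    (∀ f₀ f₁ : Polynomial K, f₀.degree < p → f₁.degree < p →
      (∀ g₀ g₁ : Polynomial K, g₀.degree < p → g₁.degree < p →
        (f₀ * derivative g₀).coeff (p - 1) - (f₁ * g₁).coeff (p - 1) = 0) →
      (∃ c : K, f₀ = C c) ∧ f₁ = 0) := by
  have hp0 : 0 < p := by omega
  refine ⟨?_, ?_, ?_, ?_, ?_⟩
  · -- well-definedness
    intro f₀ f₁ g₀ g₁ _ _ c d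
    rw [derivative_add, derivative_C, add_zero, add_mul, coeff_add]
    have hc : (C c * derivative g₀).coeff (p - 1) = 0 := by
      rw [coeff_C_mul, aux_der_coeff K p hp0, mul_zero]
    rw [hc, add_zero]
  · -- antisymmetry on the even part
    intro f₀ g₀ _ _
    have hd : (derivative (f₀ * g₀)).coeff (p - 1) = 0 := aux_der_coeff K p hp0 _
    rw [derivative_mul, coeff_add] at hd
    have : (g₀ * derivative f₀).coeff (p - 1) = (derivative f₀ * g₀).coeff (p - 1) := by
      rw [mul_comm]
    rw [this]
    simp only [zero_mul, coeff_zero, sub_zero]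
    linear_combination hd
  · -- symmetry on the odd part
    intro f₁ g₁ _ _
    rw [mul_comm f₁ g₁]
  · -- even-odd pairing vanishes
    intro f₀ g₁ _ _
    simp
  · -- nondegeneracy
    intro f₀ f₁ hf₀ hf₁ h
    have hdegX : ∀ k : ℕ, k < p → (X ^ k : Polynomial K).degree < p := by
      intro k hk
      rw [degree_X_pow]
      exact_mod_cast hk
    have hdeg0 : (0 : Polynomial K).degree < p := by
      rw [degree_zero]; exact WithBot.bot_lt_coe p
    constructor
    · refine ⟨f₀.coeff 0, ?_⟩
      ext n
      rcases Nat.eq_zero_or_pos n with rfl | hn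
      · simp
      rw [coeff_C, if_neg hn.ne']
      by_cases hnp : n < p
      · have hkp : p - n < p := by omega
        have hxd := h (X ^ (p - n)) 0 (hdegX _ hkp) hdeg0
        rw [mul_zero, coeff_zero, sub_zero, derivative_X_pow] at hxd
        have hre : f₀ * (C ((p - n : ℕ) : K) * X ^ (p - n - 1))
            = C ((p - n : ℕ) : K) * (f₀ * X ^ (p - n - 1)) := by ring
        rw [hre, coeff_C_mul, aux_mul_xpow K p f₀ _ (by omega)] at hxd
        have hidx : p - 1 - (p - n - 1) = n := by omega
        rw [hidx] at hxd
        have hne : ((p - n : ℕ) : K) ≠ 0 := by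
          intro ha
          rw [CharP.cast_eq_zero_iff K p] at ha
          have := Nat.le_of_dvd (by omega) ha
          omega
        exact (mul_eq_zero.mp hxd).resolve_left hne
      · exact coeff_eq_zero_of_degree_lt
          (lt_of_lt_of_le hf₀ (by exact_mod_cast Nat.le_of_not_lt hnp))
    · ext n
      rw [coeff_zero]
      by_cases hnp : n < p
      · have hk : p - 1 - n ≤ p - 1 := by omega
        have hxd := h 0 (X ^ (p - 1 - n)) hdeg0 (hdegX _ (by omega))
        rw [derivative_zero, mul_zero, coeff_zero, zero_sub, neg_eq_zero,
          aux_mul_xpow K p f₁ _ hk] at hxd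
        have hn' : p - 1 - (p - 1 - n) = n := by omega
        rwa [hn'] at hxd
      · exact coeff_eq_zero_of_degree_lt
          (lt_of_lt_of_le hf₁ (by exact_mod_cast Nat.le_of_not_lt hnp))
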